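/- Let X be a set, |·| : X → [0,∞) a function, m₀ > 0, d ≥ 1, β ≥ 2, and let p : (0,∞) × X → [0,∞), (t,x) ↦ p_t(x), be such that t ↦ p_t(x) is measurable for each x. Assume: (short time) there are C₀ > 0 and κ ∈ [0, ξ(1)) with p_t(x) ≤ C₀·e^{κ|x|}·exp(−t·ξ(|x|/t)) for all t > 0 and x ∈ X, where ξ(r) = r·arsinh(r) + 1 − √(1+r²); (long time) there are constants C₁, C₂, c₁, c₂ > 0 such that for all x ∈ X with |x| ≥ 1 and all t ≥ |x|, C₁·t^{−d/β}·exp(−c₁·(|x|^β/t)^{1/(β−1)}) ≤ p_t(x) ≤ C₂·t^{−d/β}·exp(−c₂·(|x|^β/t)^{1/(β−1)}). For α > 0 define k_α(x) = (1/Γ(α))·∫₀^∞ m₀·p_t(x)·t^{α−1} dt. Then for every x ∈ X with |x| ≥ 1: k_α(x) = ∞ for every α ≥ d/β; and for every compact set D ⊆ (0, d/β) there are constants 0 < c ≤ C such that c·|x|^{αβ−d} ≤ k_α(x) ≤ C·|x|^{αβ−d} for all α ∈ D and all x ∈ X with |x| ≥ 1 (in particular k_α(x) is finite for α ∈ (0,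 d/β)). -/
import Mathlib


open Filter MeasureTheory Topology
open scoped ENNReal NNReal

noncomputable section

namespace HG

variable {X : Type*}

open scoped Classical

/-- `f` has finite support (membership in `C_c(X)`). -/
def FinSupp (f : X → ℝ) : Prop := (Function.support f).Finite

/-- Membership in `𝓕`. -/
def MemF (b : X → X → ℝ) (f : X → ℝ) : Prop :=
  ∀ x : X, Summable fun y => b x y * |f y|

/-- The formal Laplacian `𝓛`. -/
def lap (b : X → X → ℝ) (c m : X → ℝ) (f : X → ℝ) (x : X) : ℝ :=
  (1 / m x) * ∑' y, b x y * (f x - f y) + (c x / m x) * f x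

/-- The energy form `𝓠`, valued in `ℝ≥0∞`. -/
def energy (b : X → X → ℝ) (c : X → ℝ) (f : X → ℝ) : ℝ≥0∞ :=
  (1 / 2) * ∑' x, ∑' y, ENNReal.ofReal (b x y * (f x - f y) ^ 2)
    + ∑' x, ENNReal.ofReal (c x * f x ^ 2)

/-- Membership in `𝓓`, the functions of finite energy. -/
def MemD (b : X → X → ℝ) (c : X → ℝ) (f : X → ℝ) : Prop := energy b c f < ⊤

/-- Membership in `𝓓₀`, the closure of `C_c(X)` w.r.t. `‖f‖_o = (𝓠(f)+f(o)²)^{1/2}`. -/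
def MemD0 (b : X → X → ℝ) (c : X → ℝ) (o : X) (f : X → ℝ) : Prop :=
  ∃ φ : ℕ → X → ℝ, (∀ n, FinSupp (φ n)) ∧
    Tendsto (fun n => energy b c (fun x => f x - φ n x)
      + ENNReal.ofReal ((f o - φ n o) ^ 2)) atTop (nhds 0)

/-- `(b,c)` is a connected graph over `(X,m)`. -/
structure IsGraph (b : X → X → ℝ) (c m : X → ℝ) : Prop where
  symm : ∀ x y, b x y = b y x
  nonneg : ∀ x y, 0 ≤ b x y
  loopless : ∀ x, b x x = 0
  deg_summable : ∀ x, Summable fun y => b x y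
  c_nonneg : ∀ x, 0 ≤ c x
  m_pos : ∀ x, 0 < m x
  connected : ∀ x y : X, ∃ (k : ℕ) (p : ℕ → X), p 0 = x ∧ p k = y ∧
    ∀ i < k, 0 < b (p i) (p (i + 1))

/-- `u` is superharmonic: `u ∈ 𝓕` and `𝓛u ≥ 0`. -/
def Superharmonic (b : X → X → ℝ) (c m : X → ℝ) (u : X → ℝ) : Prop :=
  MemF b u ∧ ∀ x, 0 ≤ lap b c m u x

/-- `u` is subharmonic: `u ∈ 𝓕` and `𝓛u ≤ 0`. -/
def Subharmonic (b : X → X → ℝ) (c m : X → ℝ) (u : X → ℝ) : Prop :=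
  MemF b u ∧ ∀ x, lap b c m u x ≤ 0

/-- The Green operator `Gk(x) = ∑_y G(x,y) k(y)`. -/
def Gop (G : X → X → ℝ) (k : X → ℝ) (x : X) : ℝ := ∑' y, G x y * k y

/-- Membership in `𝓖`, the domain of the Green operator. -/
def MemG (G : X → X → ℝ) (k : X → ℝ) : Prop :=
  ∀ x, Summable fun y => G x y * |k y|

/-- `u` is a potential: `u ∈ 𝓕`, `𝓛u ∈ 𝓖` and `u = G𝓛u`. -/
def IsPotential (b : X → X → ℝ) (c m : X → ℝ) (G : X → X → ℝ) (u : X → ℝ) : Prop :=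
  MemF b u ∧ MemG G (lap b c m u) ∧ u = Gop G (lap b c m u)

/-- Membership in `𝓖₂ = {k ∈ 𝓖 : ∑_x m(x)|k(x)| (G|k|)(x) < ∞}`. -/
def MemG2 (m : X → ℝ) (G : X → X → ℝ) (k : X → ℝ) : Prop :=
  MemG G k ∧ Summable fun x => m x * |k x| * Gop G (fun y => |k y|) x

/-- `G` is the Green function of the (transient) graph `(b,c)` over `(X,m)`:
for every `y`, `G(·,y)` is the unique function in `𝓓₀ ∩ 𝓕` with `𝓛 G(·,y) = 1_y`;
it is strictly positive and symmetric. -/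
structure IsGreen (b : X → X → ℝ) (c m : X → ℝ) (o : X) (G : X → X → ℝ) : Prop where
  pos : ∀ x y, 0 < G x y
  symm : ∀ x y, G x y = G y x
  memF : ∀ y, MemF b fun x => G x y
  memD0 : ∀ y, MemD0 b c o fun x => G x y
  lap_eq : ∀ y x, lap b c m (fun z => G z y) x = if x = y then 1 else 0
  unique : ∀ (y : X) (u : X → ℝ), MemF b u → MemD0 b c o u →
    (∀ x, lap b c m u x = if x = y then 1 else 0) → u = fun x => G x y

/-- `w(φ) = ∑_x m(x) w(x) φ(x)²`. -/
def wsum (m w φ : X → ℝ) : ℝ := ∑' x, m x * w x * φ x ^ 2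

/-- `w` is a Hardy type weight: `𝓠(φ) ≥ ∑_x m(x) w(x) φ(x)²` for all `φ ∈ C_c(X)`. -/
def IsHardyType (b : X → X → ℝ) (c m w : X → ℝ) : Prop :=
  ∀ φ : X → ℝ, FinSupp φ → ENNReal.ofReal (wsum m w φ) ≤ energy b c φ

/-- `w` is a Hardy weight: a non-negative Hardy type weight. -/
def IsHardy (b : X → X → ℝ) (c m w : X → ℝ) : Prop :=
  (∀ x, 0 ≤ w x) ∧ IsHardyType b c m w

/-- A Hardy weight is critical if the only Hardy weight above it is itself. -/
def IsCriticalHardy (b : X → X → ℝ) (c m w : X → ℝ) : Prop :=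
  IsHardy b c m w ∧ ∀ w', IsHardy b c m w' → (∀ x, w x ≤ w' x) → w' = w

/-- A Hardy type weight is critical if the only Hardy type weight above it is itself. -/
def IsCriticalHardyType (b : X → X → ℝ) (c m w : X → ℝ) : Prop :=
  IsHardyType b c m w ∧ ∀ w', IsHardyType b c m w' → (∀ x, w x ≤ w' x) → w' = w

/-- A ground state of `w`: a strictly positive `v ∈ 𝓕` with `𝓛v = wv`. -/
def IsGroundState (b : X → X → ℝ) (c m w v : X → ℝ) : Prop :=
  MemF b v ∧ (∀ x, 0 < v x) ∧ ∀ x, lap b c m v x = w x * v x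

/-- A ground state of `w` obtained as pointwise limit of a null sequence. -/
def IsGroundStateSeq (b : X → X → ℝ) (c m w v : X → ℝ) : Prop :=
  IsGroundState b c m w v ∧
  ∃ e : ℕ → X → ℝ, (∀ n, FinSupp (e n)) ∧
    Tendsto (fun n => (energy b c (e n)).toReal - wsum m w (e n)) atTop (nhds 0) ∧
    ∀ x, Tendsto (fun n => e n x) atTop (nhds (v x))

/-- Membership in `C₀(X)`, functions vanishing at infinity. -/
def MemC0 (f : X → ℝ) : Prop := ∀ ε : ℝ, 0 < ε → {x | ε ≤ |f x|}.Finite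

/-- The function `ξ(r) = r·arsinh(r) + 1 − √(1+r²)`. -/
def xi (r : ℝ) : ℝ := r * Real.arsinh r + 1 - Real.sqrt (1 + r ^ 2)

/-- The Riesz kernel `k_α(x) = (1/Γ(α)) ∫₀^∞ m₀ p_t(x) t^{α−1} dt`,
valued in `ℝ≥0∞`. -/
def rieszKernel {X : Type*} (m₀ : ℝ) (p : ℝ → X → ℝ) (α : ℝ) (x : X) : ℝ≥0∞ :=
  ENNReal.ofReal (1 / Real.Gamma α) *
    ∫⁻ t in Set.Ioi (0 : ℝ), ENNReal.ofReal (m₀ * p t x * t ^ (α - 1))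

lemma hasDerivAt_xi (r : ℝ) : HasDerivAt xi (Real.arsinh r) r := by
  have hpos : (0:ℝ) < 1 + r ^ 2 := by positivity
  have hsq : Real.sqrt (1 + r ^ 2) ≠ 0 := by positivity
  have h1 : HasDerivAt (fun s : ℝ => s * Real.arsinh s)
      (1 * Real.arsinh r + r * (Real.sqrt (1 + r ^ 2))⁻¹) r :=
    (hasDerivAt_id r).mul (Real.hasDerivAt_arsinh r)
  have h2 : HasDerivAt (fun s : ℝ => Real.sqrt (1 + s ^ 2))
      (1 / (2 * Real.sqrt (1 + r ^ 2)) * (0 + 2 * r)) r := by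
    exact (Real.hasDerivAt_sqrt hpos.ne').comp r
      ((hasDerivAt_const r (1:ℝ)).add ((hasDerivAt_pow 2 r).congr_deriv (by ring)))
  have h3 : HasDerivAt xi
      (1 * Real.arsinh r + r * (Real.sqrt (1 + r ^ 2))⁻¹ + 0
        - 1 / (2 * Real.sqrt (1 + r ^ 2)) * (0 + 2 * r)) r :=
    (h1.add (hasDerivAt_const r 1)).sub h2
  convert h3 using 1
  field_simp
  ring

lemma xi_linear_le {r : ℝ} (hr : 1 ≤ r) : xi 1 * r ≤ xi r := by
  have key : ∀ s ∈ Set.Ici (1:ℝ), xi 1 * s - xi s ≤ xi 1 * 1 - xi 1 := by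
    have hmono : MonotoneOn (fun s => xi s - xi 1 * s) (Set.Ici (1:ℝ)) := by
      have hder : ∀ s ∈ interior (Set.Ici (1:ℝ)),
          0 ≤ deriv (fun s => xi s - xi 1 * s) s := by
        intro s hs
        rw [interior_Ici] at hs
        have hlin : HasDerivAt (fun y : ℝ => xi 1 * y) (xi 1) s := by
          simpa using (hasDerivAt_id s).const_mul (xi 1)
        have hd : HasDerivAt (fun s => xi s - xi 1 * s) (Real.arsinh s - xi 1) s :=
          (hasDerivAt_xi s).sub hlin
        rw [hd.deriv]
        have h1 : Real.arsinh 1 ≤ Real.arsinh s := Real.arsinh_le_arsinh.2 (le_of_lt hs)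
        have h2 : (1:ℝ) ≤ Real.sqrt (1 + 1 ^ 2) := by
          rw [show ((1:ℝ) + 1 ^ 2) = 2 by norm_num]
          nlinarith [Real.sq_sqrt (by norm_num : (2:ℝ) ≥ 0), Real.sqrt_nonneg 2]
        simp only [xi, one_mul] at *
        linarith
      exact monotoneOn_of_deriv_nonneg (convex_Ici 1)
        (Continuous.continuousOn (by
          have hxi : Continuous xi := by
            unfold xi
            exact ((continuous_id.mul Real.continuous_arsinh).add continuous_const).sub
              ((continuous_const.add (continuous_pow 2)).sqrt)
          exact hxi.sub (continuous_const.mul continuous_id)))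
        (fun s hs => by
          rw [interior_Ici] at hs
          have hlin : HasDerivAt (fun y : ℝ => xi 1 * y) (xi 1) s := by
            simpa using (hasDerivAt_id s).const_mul (xi 1)
          exact ((hasDerivAt_xi s).sub hlin).differentiableAt.differentiableWithinAt)
        hder
    intro s hs
    have := hmono (Set.mem_Ici.2 le_rfl) hs hs
    simp only at this ⊢
    linarith
  have := key r hr
  linarith

lemma pow_le_exp_mul {v : ℝ} (hv : 0 ≤ v) (M : ℕ) :
    v ^ M ≤ (Nat.factorial M : ℝ) * Real.exp v := by
  have := Real.pow_div_factorial_le_exp (x := v) hv M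
  have hM : (0:ℝ) < (Nat.factorial M : ℝ) := by positivity
  rw [div_le_iff₀ hM] at this
  linarith [this]

lemma rpow_mul_exp_neg_le {ε S N : ℝ} (hε : 0 < ε) (hN : 1 ≤ N) (hS : 0 ≤ S) :
    N ^ S * Real.exp (-(ε * N)) ≤ (Nat.factorial (Nat.ceil S) : ℝ) / ε ^ (Nat.ceil S) := by
  set M := Nat.ceil S with hM
  have hN0 : (0:ℝ) < N := by linarith
  have h1 : N ^ S ≤ N ^ (M:ℝ) :=
    Real.rpow_le_rpow_of_exponent_le hN (Nat.le_ceil S)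
  have h2 : N ^ (M:ℝ) = N ^ M := Real.rpow_natCast N M
  have h3 : (ε * N) ^ M ≤ (Nat.factorial M : ℝ) * Real.exp (ε * N) :=
    pow_le_exp_mul (by positivity) M
  have hεM : (0:ℝ) < ε ^ M := by positivity
  have h4 : N ^ M ≤ (Nat.factorial M : ℝ) / ε ^ M * Real.exp (ε * N) := by
    rw [mul_pow] at h3
    rw [div_mul_eq_mul_div, le_div_iff₀ hεM]
    nlinarith [h3]
  calc N ^ S * Real.exp (-(ε * N)) ≤ N ^ M * Real.exp (-(ε * N)) := by
        rw [← h2]; exact mul_le_mul_of_nonneg_right h1 (Real.exp_nonneg _)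
    _ ≤ ((Nat.factorial M : ℝ) / ε ^ M * Real.exp (ε * N)) * Real.exp (-(ε * N)) :=
        mul_le_mul_of_nonneg_right h4 (Real.exp_nonneg _)
    _ = (Nat.factorial M : ℝ) / ε ^ M := by
        rw [mul_assoc, ← Real.exp_add]; simp

lemma measurable_rpow_const (s : ℝ) : Measurable fun t : ℝ => t ^ s :=
  measurable_of_continuousOn_compl_singleton 0 fun x hx =>
    (Real.continuousAt_rpow_const x s (Or.inl hx)).continuousWithinAt

lemma lint_Ioc_rpow {b s : ℝ} (hb : 0 < b) (hs : -1 < s) :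
    ∫⁻ t in Set.Ioc 0 b, ENNReal.ofReal (t ^ s) = ENNReal.ofReal (b ^ (s + 1) / (s + 1)) := by
  have hint : IntegrableOn (fun t : ℝ => t ^ s) (Set.Ioc 0 b) := by
    have := intervalIntegral.intervalIntegrable_rpow' (a := 0) (b := b) hs
    simpa [intervalIntegrable_iff_integrableOn_Ioc_of_le hb.le] using this
  rw [← ofReal_integral_eq_lintegral_ofReal hint]
  · congr 1
    rw [← intervalIntegral.integral_of_le hb.le, integral_rpow (Or.inl hs)]
    rw [Real.zero_rpow (by linarith : s + 1 ≠ 0)]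
    ring
  · filter_upwards [ae_restrict_mem measurableSet_Ioc] with t ht
    exact Real.rpow_nonneg ht.1.le s

lemma lint_Ioi_rpow {c s : ℝ} (hc : 0 < c) (hs : s < -1) :
    ∫⁻ t in Set.Ioi c, ENNReal.ofReal (t ^ s) = ENNReal.ofReal (c ^ (s + 1) / (-(s + 1))) := by
  rw [← ofReal_integral_eq_lintegral_ofReal (integrableOn_Ioi_rpow_of_lt hs hc)]
  · rw [integral_Ioi_rpow_of_lt hs hc]
    rw [div_neg, neg_div]
  · filter_upwards [ae_restrict_mem measurableSet_Ioi] with t ht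
    exact Real.rpow_nonneg (hc.trans ht).le s

lemma lint_Ioi_rpow_top {c s : ℝ} (hc : 0 < c) (hs : -1 ≤ s) :
    ∫⁻ t in Set.Ioi c, ENNReal.ofReal (t ^ s) = ⊤ := by
  by_contra h
  have hmeas : Measurable fun t : ℝ => t ^ s := measurable_rpow_const s
  have hint : IntegrableOn (fun t : ℝ => t ^ s) (Set.Ioi c) := by
    refine ⟨hmeas.aestronglyMeasurable, ?_⟩
    rw [hasFiniteIntegral_iff_norm]
    have : ∀ᵐ t ∂(volume.restrict (Set.Ioi c)),
        ENNReal.ofReal ‖(t:ℝ) ^ s‖ = ENNReal.ofReal (t ^ s) := by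
      filter_upwards [ae_restrict_mem measurableSet_Ioi] with t ht
      rw [Real.norm_eq_abs, abs_of_nonneg (Real.rpow_nonneg (hc.trans ht).le s)]
    rw [lintegral_congr_ae this]
    exact lt_top_iff_ne_top.2 h
  rw [integrableOn_Ioi_rpow_iff hc] at hint
  linarith

set_option maxHeartbeats 1000000 in
/-- Theorem 4.5, asymptotics of the Riesz kernel. Under the
short time Davies–Gaffney type bound and two-sided long time (sub-)Gaussian
bounds with parameters `d ≥ 1`, `β ≥ 2`, the Riesz kernel `k_α` is infinite for
`α ≥ d/β`, and for every compact `D ⊆ (0, d/β)` there are `0 < c ≤ C` with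
`c·|x|^{αβ−d} ≤ k_α(x) ≤ C·|x|^{αβ−d}` for all `α ∈ D` and `|x| ≥ 1`. -/
theorem stmt19 {X : Type*} (n : X → ℝ) (hn : ∀ x, 0 ≤ n x)
    (m₀ : ℝ) (hm₀ : 0 < m₀) (d β : ℝ) (hd : 1 ≤ d) (hβ : 2 ≤ β)
    (p : ℝ → X → ℝ) (hmeas : ∀ x, Measurable fun t => p t x)
    (hpos : ∀ t : ℝ, 0 < t → ∀ x, 0 ≤ p t x)
    (C₀ κ : ℝ) (hC₀ : 0 < C₀) (hκ0 : 0 ≤ κ) (hκ1 : κ < xi 1)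
    (hshort : ∀ t : ℝ, 0 < t → ∀ x,
      p t x ≤ C₀ * Real.exp (κ * n x) * Real.exp (-t * xi (n x / t)))
    (C₁ C₂ c₁ c₂ : ℝ) (hC₁ : 0 < C₁) (hC₂ : 0 < C₂) (hc₁ : 0 < c₁) (hc₂ : 0 < c₂)
    (hlong : ∀ x, 1 ≤ n x → ∀ t : ℝ, n x ≤ t →
      C₁ * t ^ (-(d / β)) * Real.exp (-c₁ * (n x ^ β / t) ^ (1 / (β - 1))) ≤ p t x ∧
      p t x ≤ C₂ * t ^ (-(d / β)) * Real.exp (-c₂ * (n x ^ β / t) ^ (1 / (β - 1)))) :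
    (∀ α : ℝ, d / β ≤ α → ∀ x, 1 ≤ n x → rieszKernel m₀ p α x = ⊤) ∧
    (∀ D : Set ℝ, IsCompact D → D ⊆ Set.Ioo 0 (d / β) →
      ∃ c C : ℝ, 0 < c ∧ c ≤ C ∧ ∀ α ∈ D, ∀ x, 1 ≤ n x →
        ENNReal.ofReal (c * n x ^ (α * β - d)) ≤ rieszKernel m₀ p α x ∧
        rieszKernel m₀ p α x ≤ ENNReal.ofReal (C * n x ^ (α * β - d))) := by
  have hβ0 : (0:ℝ) < β := by linarith
  have hd0 : (0:ℝ) < d := by linarith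
  set q : ℝ := d / β with hqdef
  have hq : 0 < q := div_pos hd0 hβ0
  have hβq : β * q = d := by rw [hqdef]; field_simp
  -- pointwise lower bound on `Ioi (n x ^ β)`
  have hlow : ∀ (α : ℝ) (x : X), 1 ≤ n x → ∀ t ∈ Set.Ioi (n x ^ β),
      ENNReal.ofReal (m₀ * (C₁ * Real.exp (-c₁)) * t ^ (α - 1 - q)) ≤
      ENNReal.ofReal (m₀ * p t x * t ^ (α - 1)) := by
    intro α x hx t ht
    rw [Set.mem_Ioi] at ht
    have hN0 : (0:ℝ) < n x := lt_of_lt_of_le one_pos hx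
    have hNb : (0:ℝ) < n x ^ β := Real.rpow_pos_of_pos hN0 β
    have ht0 : (0:ℝ) < t := hNb.trans ht
    have hNt : n x ≤ t := by
      have h1 : n x ≤ n x ^ β := by
        calc n x = n x ^ (1:ℝ) := (Real.rpow_one _).symm
          _ ≤ n x ^ β := Real.rpow_le_rpow_of_exponent_le hx (by linarith)
      linarith
    have hplow := (hlong x hx t hNt).1
    have hu1 : n x ^ β / t ≤ 1 := by
      rw [div_le_one ht0]; exact ht.le
    have hu0 : (0:ℝ) ≤ n x ^ β / t := div_nonneg hNb.le ht0.le
    have hexp : Real.exp (-c₁) ≤ Real.exp (-c₁ * (n x ^ β / t) ^ (1 / (β - 1))) := by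
      apply Real.exp_le_exp.2
      have h := Real.rpow_le_one hu0 hu1 (le_of_lt (by apply div_pos one_pos; linarith : (0:ℝ) < 1 / (β - 1)))
      nlinarith [h, hc₁.le]
    apply ENNReal.ofReal_le_ofReal
    have htq : t ^ (-q) * t ^ (α - 1) = t ^ (α - 1 - q) := by
      rw [← Real.rpow_add ht0]
      congr 1
      ring
    have htqnn : (0:ℝ) ≤ t ^ (-q) := Real.rpow_nonneg ht0.le _
    have hle : C₁ * Real.exp (-c₁) * t ^ (-q) ≤ p t x := by
      calc C₁ * Real.exp (-c₁) * t ^ (-q)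
          ≤ C₁ * Real.exp (-c₁ * (n x ^ β / t) ^ (1 / (β - 1))) * t ^ (-q) :=
            mul_le_mul_of_nonneg_right (mul_le_mul_of_nonneg_left hexp hC₁.le) htqnn
        _ = C₁ * t ^ (-q) * Real.exp (-c₁ * (n x ^ β / t) ^ (1 / (β - 1))) := by ring
        _ ≤ p t x := hplow
    have h0 : (0:ℝ) ≤ t ^ (α - 1) := Real.rpow_nonneg ht0.le _
    calc m₀ * (C₁ * Real.exp (-c₁)) * t ^ (α - 1 - q)
        = m₀ * (C₁ * Real.exp (-c₁) * t ^ (-q)) * t ^ (α - 1) := by rw [← htq]; ring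
      _ ≤ m₀ * p t x * t ^ (α - 1) :=
          mul_le_mul_of_nonneg_right (mul_le_mul_of_nonneg_left hle hm₀.le) h0
  constructor
  · -- part 1
    intro α hα x hx
    have hα0 : 0 < α := lt_of_lt_of_le hq hα
    have hN0 : (0:ℝ) < n x := lt_of_lt_of_le one_pos hx
    have hNb : (0:ℝ) < n x ^ β := Real.rpow_pos_of_pos hN0 β
    have hK : (0:ℝ) < m₀ * (C₁ * Real.exp (-c₁)) := by positivity
    have htop : ∫⁻ t in Set.Ioi (0:ℝ), ENNReal.ofReal (m₀ * p t x * t ^ (α - 1)) = ⊤ := by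
      rw [eq_top_iff]
      have hs1 : (-1:ℝ) ≤ α - 1 - q := by linarith
      calc (⊤:ℝ≥0∞) = ∫⁻ t in Set.Ioi (n x ^ β),
            ENNReal.ofReal (m₀ * (C₁ * Real.exp (-c₁))) * ENNReal.ofReal (t ^ (α - 1 - q)) := by
            rw [lintegral_const_mul' _ _ ENNReal.ofReal_ne_top,
              lint_Ioi_rpow_top hNb hs1,
              ENNReal.mul_top (ENNReal.ofReal_pos.2 hK).ne']
        _ = ∫⁻ t in Set.Ioi (n x ^ β),
            ENNReal.ofReal (m₀ * (C₁ * Real.exp (-c₁)) * t ^ (α - 1 - q)) := by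
            apply lintegral_congr_ae
            filter_upwards [ae_restrict_mem measurableSet_Ioi] with t ht
            rw [ENNReal.ofReal_mul hK.le]
        _ ≤ ∫⁻ t in Set.Ioi (n x ^ β),
            ENNReal.ofReal (m₀ * p t x * t ^ (α - 1)) :=
            setLIntegral_mono' measurableSet_Ioi fun t ht => hlow α x hx t ht
        _ ≤ ∫⁻ t in Set.Ioi (0:ℝ), ENNReal.ofReal (m₀ * p t x * t ^ (α - 1)) :=
            lintegral_mono_set (Set.Ioi_subset_Ioi hNb.le)
    have hΓ : 0 < 1 / Real.Gamma α := by
      have := Real.Gamma_pos_of_pos hα0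
      positivity
    rw [rieszKernel, htop, ENNReal.mul_top (ENNReal.ofReal_pos.2 hΓ).ne']
  · -- part 2
    intro D hD hDsub
    rcases Set.eq_empty_or_nonempty D with rfl | hne
    · exact ⟨1, 1, one_pos, le_rfl, fun α hα => absurd hα (Set.notMem_empty α)⟩
    obtain ⟨αlo, hloD, hloMin⟩ := hD.exists_isMinOn hne continuousOn_id
    obtain ⟨αhi, hhiD, hhiMax⟩ := hD.exists_isMaxOn hne continuousOn_id
    have hlo : ∀ y ∈ D, αlo ≤ y := fun y hy => hloMin hy
    have hhi : ∀ y ∈ D, y ≤ αhi := fun y hy => hhiMax hy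
    have hαlo0 : 0 < αlo := (hDsub hloD).1
    have hαhiq : αhi < q := (hDsub hhiD).2
    have hGcont : ContinuousOn Real.Gamma D := by
      intro a ha
      have ha0 : 0 < a := (hDsub ha).1
      refine (Real.differentiableAt_Gamma (fun m => ?_)).continuousAt.continuousWithinAt
      have : (-(m:ℝ)) ≤ 0 := neg_nonpos.2 (Nat.cast_nonneg m)
      exact (lt_of_le_of_lt this ha0).ne'
    obtain ⟨αg, hαgD, hαgMax⟩ := hD.exists_isMaxOn hne hGcont
    obtain ⟨αs, hαsD, hαsMin⟩ := hD.exists_isMinOn hne hGcont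
    set Γmax := Real.Gamma αg with hΓmaxdef
    set Γmin := Real.Gamma αs with hΓmindef
    have hΓmax : ∀ y ∈ D, Real.Gamma y ≤ Γmax := fun y hy => hαgMax hy
    have hΓmin : ∀ y ∈ D, Γmin ≤ Real.Gamma y := fun y hy => hαsMin hy
    have hΓmax0 : 0 < Γmax := Real.Gamma_pos_of_pos (hDsub hαgD).1
    have hΓmin0 : 0 < Γmin := Real.Gamma_pos_of_pos (hDsub hαsD).1
    set ε := xi 1 - κ with hεdef
    have hε : 0 < ε := by linarith [hεdef.ge, hεdef.le]
    set E₁ : ℝ := (Nat.factorial (Nat.ceil d) : ℝ) / ε ^ (Nat.ceil d) with hE₁def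
    have hE₁ : 0 < E₁ := by
      rw [hE₁def]
      exact div_pos (by positivity) (pow_pos hε _)
    set K₁ : ℝ := m₀ * C₀ * E₁ / αlo with hK₁def
    set M₂ := Nat.ceil ((1 + q) * (β - 1)) with hM₂def
    set A : ℝ := (Nat.factorial M₂ : ℝ) / c₂ ^ M₂ with hAdef
    have hA : 0 < A := by
      rw [hAdef]
      exact div_pos (by positivity) (pow_pos hc₂ _)
    set K₂ : ℝ := m₀ * C₂ * A with hK₂def
    set K₃ : ℝ := m₀ * C₂ / (q - αhi) with hK₃def
    have hK₁ : 0 < K₁ := div_pos (mul_pos (mul_pos hm₀ hC₀) hE₁) hαlo0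
    have hK₂ : 0 < K₂ := mul_pos (mul_pos hm₀ hC₂) hA
    have hK₃ : 0 < K₃ := div_pos (mul_pos hm₀ hC₂) (by linarith)
    set c0 : ℝ := Γmax⁻¹ * (m₀ * (C₁ * Real.exp (-c₁)) * 2 ^ (-(1 + q))) with hc0def
    set C0 : ℝ := Γmin⁻¹ * (K₁ + K₂ + K₃) with hC0def
    have h2pow : (0:ℝ) < 2 ^ (-(1 + q)) := Real.rpow_pos_of_pos two_pos _
    have hc0 : 0 < c0 := mul_pos (inv_pos.2 hΓmax0)
      (mul_pos (mul_pos hm₀ (mul_pos hC₁ (Real.exp_pos _))) h2pow)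
    have hC0 : 0 < C0 := mul_pos (inv_pos.2 hΓmin0) (by linarith)
    refine ⟨min c0 C0, max c0 C0, lt_min hc0 hC0,
      (min_le_left _ _).trans (le_max_left _ _), ?_⟩
    intro α hαD x hx
    have hα0 : 0 < α := (hDsub hαD).1
    have hαq : α < q := (hDsub hαD).2
    have hΓα0 : 0 < Real.Gamma α := Real.Gamma_pos_of_pos hα0
    have hN0 : (0:ℝ) < n x := lt_of_lt_of_le one_pos hx
    have hNb : (0:ℝ) < n x ^ β := Real.rpow_pos_of_pos hN0 β
    have hNNb : n x ≤ n x ^ β := by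
      calc n x = n x ^ (1:ℝ) := (Real.rpow_one _).symm
        _ ≤ n x ^ β := Real.rpow_le_rpow_of_exponent_le hx (by linarith)
    have hNpow : (0:ℝ) < n x ^ (α * β - d) := Real.rpow_pos_of_pos hN0 _
    -- key exponent identity
    have hβαq : β * (α - q) = α * β - d := by
      rw [mul_sub, hβq]; ring
    have hNbαq : (n x ^ β) ^ (α - q) = n x ^ (α * β - d) := by
      rw [← Real.rpow_mul hN0.le, hβαq]
    set J := ∫⁻ t in Set.Ioi (0:ℝ), ENNReal.ofReal (m₀ * p t x * t ^ (α - 1)) with hJdef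
    have hkerJ : rieszKernel m₀ p α x = ENNReal.ofReal (1 / Real.Gamma α) * J := rfl
    constructor
    · -- lower bound
      set K : ℝ := m₀ * (C₁ * Real.exp (-c₁)) with hKdef
      have hK : 0 < K := mul_pos hm₀ (mul_pos hC₁ (Real.exp_pos _))
      have hconst : ENNReal.ofReal (K * (2 * n x ^ β) ^ (α - 1 - q)) *
          ENNReal.ofReal (n x ^ β)
          ≤ ∫⁻ t in Set.Ioc (n x ^ β) (2 * n x ^ β),
              ENNReal.ofReal (m₀ * p t x * t ^ (α - 1)) := by
        have hvol : volume (Set.Ioc (n x ^ β) (2 * n x ^ β)) = ENNReal.ofReal (n x ^ β) := by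
          rw [Real.volume_Ioc]
          congr 1
          ring
        calc ENNReal.ofReal (K * (2 * n x ^ β) ^ (α - 1 - q)) * ENNReal.ofReal (n x ^ β)
            = ∫⁻ _ in Set.Ioc (n x ^ β) (2 * n x ^ β),
                ENNReal.ofReal (K * (2 * n x ^ β) ^ (α - 1 - q)) := by
              rw [setLIntegral_const, hvol]
          _ ≤ ∫⁻ t in Set.Ioc (n x ^ β) (2 * n x ^ β),
                ENNReal.ofReal (m₀ * p t x * t ^ (α - 1)) := by
              refine setLIntegral_mono' measurableSet_Ioc fun t ht => ?_
              have ht0 : (0:ℝ) < t := hNb.trans ht.1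
              have h1 : (2 * n x ^ β) ^ (α - 1 - q) ≤ t ^ (α - 1 - q) :=
                Real.rpow_le_rpow_of_nonpos ht0 ht.2 (by linarith)
              refine le_trans (ENNReal.ofReal_le_ofReal
                (mul_le_mul_of_nonneg_left h1 hK.le)) ?_
              exact hlow α x hx t (Set.mem_Ioi.2 ht.1)
      have i1 : Γmax⁻¹ ≤ 1 / Real.Gamma α := by
        rw [one_div]
        exact inv_anti₀ hΓα0 (hΓmax α hαD)
      have i2 : (2:ℝ) ^ (-(1 + q)) ≤ 2 ^ (α - 1 - q) :=
        Real.rpow_le_rpow_of_exponent_le one_le_two (by linarith)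
      have e1 : (2 * n x ^ β) ^ (α - 1 - q) * n x ^ β
          = 2 ^ (α - 1 - q) * n x ^ (α * β - d) := by
        rw [Real.mul_rpow (by norm_num) hNb.le, mul_assoc]
        congr 1
        calc (n x ^ β) ^ (α - 1 - q) * n x ^ β
            = (n x ^ β) ^ (α - 1 - q) * (n x ^ β) ^ (1:ℝ) := by rw [Real.rpow_one]
          _ = (n x ^ β) ^ (α - 1 - q + 1) := (Real.rpow_add hNb _ _).symm
          _ = (n x ^ β) ^ (α - q) := by rw [show α - 1 - q + 1 = α - q from by ring]
          _ = n x ^ (α * β - d) := hNbαq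
      have i3 : Γmax⁻¹ * (K * 2 ^ (-(1 + q))) ≤ 1 / Real.Gamma α * (K * 2 ^ (α - 1 - q)) :=
        mul_le_mul i1 (mul_le_mul_of_nonneg_left i2 hK.le)
          (mul_nonneg hK.le (Real.rpow_nonneg (by norm_num) _))
          (one_div_pos.2 hΓα0).le
      have hR1 : min c0 C0 * n x ^ (α * β - d)
          ≤ 1 / Real.Gamma α * (K * ((2 * n x ^ β) ^ (α - 1 - q) * n x ^ β)) := by
        calc min c0 C0 * n x ^ (α * β - d)
            ≤ c0 * n x ^ (α * β - d) :=
              mul_le_mul_of_nonneg_right (min_le_left _ _) hNpow.le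
          _ = Γmax⁻¹ * (K * 2 ^ (-(1 + q))) * n x ^ (α * β - d) := by rw [hc0def]
          _ ≤ 1 / Real.Gamma α * (K * 2 ^ (α - 1 - q)) * n x ^ (α * β - d) :=
              mul_le_mul_of_nonneg_right i3 hNpow.le
          _ = 1 / Real.Gamma α * (K * ((2 * n x ^ β) ^ (α - 1 - q) * n x ^ β)) := by
              rw [e1]; ring
      calc ENNReal.ofReal (min c0 C0 * n x ^ (α * β - d))
          ≤ ENNReal.ofReal (1 / Real.Gamma α *
              (K * ((2 * n x ^ β) ^ (α - 1 - q) * n x ^ β))) :=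
            ENNReal.ofReal_le_ofReal hR1
        _ = ENNReal.ofReal (1 / Real.Gamma α) *
            (ENNReal.ofReal (K * (2 * n x ^ β) ^ (α - 1 - q)) * ENNReal.ofReal (n x ^ β)) := by
            rw [← ENNReal.ofReal_mul (mul_nonneg hK.le (Real.rpow_nonneg
              (by positivity) _)),
              ← ENNReal.ofReal_mul (one_div_pos.2 hΓα0).le]
            congr 1
            ring
        _ ≤ ENNReal.ofReal (1 / Real.Gamma α) * J := by
            refine mul_le_mul_right (hconst.trans (lintegral_mono_set ?_)) _
            exact fun t ht => Set.mem_Ioi.2 (hNb.trans ht.1)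
        _ = rieszKernel m₀ p α x := hkerJ.symm
    · -- upper bound
      have hΓle : ENNReal.ofReal (1 / Real.Gamma α) ≤ ENNReal.ofReal (Γmin⁻¹) :=
        ENNReal.ofReal_le_ofReal (by
          rw [one_div]
          exact inv_anti₀ hΓmin0 (hΓmin α hαD))
      -- J₁ : short time piece
      have hJ1 : (∫⁻ t in Set.Ioc (0:ℝ) (n x), ENNReal.ofReal (m₀ * p t x * t ^ (α - 1)))
          ≤ ENNReal.ofReal (K₁ * n x ^ (α * β - d)) := by
        have hEnn : (0:ℝ) ≤ m₀ * C₀ * Real.exp (-(ε * n x)) :=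
          mul_nonneg (mul_nonneg hm₀.le hC₀.le) (Real.exp_pos _).le
        have hpt : ∀ t ∈ Set.Ioc (0:ℝ) (n x),
            ENNReal.ofReal (m₀ * p t x * t ^ (α - 1)) ≤
            ENNReal.ofReal (m₀ * C₀ * Real.exp (-(ε * n x))) * ENNReal.ofReal (t ^ (α - 1)) := by
          intro t ht
          rw [← ENNReal.ofReal_mul hEnn]
          apply ENNReal.ofReal_le_ofReal
          have ht0 : (0:ℝ) < t := ht.1
          have hr1 : (1:ℝ) ≤ n x / t := (one_le_div ht0).2 ht.2
          have hxiN : xi 1 * n x ≤ t * xi (n x / t) := by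
            have h := xi_linear_le hr1
            have h2 := mul_le_mul_of_nonneg_left h ht0.le
            calc xi 1 * n x = t * (xi 1 * (n x / t)) := by field_simp
              _ ≤ t * xi (n x / t) := h2
          have hexpb : Real.exp (κ * n x) * Real.exp (-t * xi (n x / t))
              ≤ Real.exp (-(ε * n x)) := by
            rw [← Real.exp_add, Real.exp_le_exp]
            have hεn : ε * n x = xi 1 * n x - κ * n x := by rw [hεdef]; ring
            have hneg : -t * xi (n x / t) = -(t * xi (n x / t)) := by ring
            rw [hneg]
            linarith [hxiN, hεn]
          have hp := hshort t ht0 x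
          have htnn : (0:ℝ) ≤ t ^ (α - 1) := Real.rpow_nonneg ht0.le _
          calc m₀ * p t x * t ^ (α - 1)
              ≤ m₀ * (C₀ * (Real.exp (κ * n x) * Real.exp (-t * xi (n x / t)))) * t ^ (α - 1) := by
                refine mul_le_mul_of_nonneg_right (mul_le_mul_of_nonneg_left ?_ hm₀.le) htnn
                calc p t x ≤ C₀ * Real.exp (κ * n x) * Real.exp (-t * xi (n x / t)) := hp
                  _ = C₀ * (Real.exp (κ * n x) * Real.exp (-t * xi (n x / t))) := by ring
            _ ≤ m₀ * C₀ * Real.exp (-(ε * n x)) * t ^ (α - 1) := by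
                refine mul_le_mul_of_nonneg_right ?_ htnn
                have h3 := mul_le_mul_of_nonneg_left hexpb (mul_nonneg hm₀.le hC₀.le)
                calc m₀ * (C₀ * (Real.exp (κ * n x) * Real.exp (-t * xi (n x / t))))
                    = m₀ * C₀ * (Real.exp (κ * n x) * Real.exp (-t * xi (n x / t))) := by ring
                  _ ≤ m₀ * C₀ * Real.exp (-(ε * n x)) := h3
        have hXs : Real.exp (-(ε * n x)) * n x ^ (α + d - α * β) ≤ E₁ := by
          have h1 : n x ^ (α + d - α * β) ≤ n x ^ d := by
            apply Real.rpow_le_rpow_of_exponent_le hx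
            have hab : 0 ≤ α * (β - 1) := mul_nonneg hα0.le (by linarith)
            have hab2 : α * (β - 1) = α * β - α := by ring
            linarith
          have h2 := rpow_mul_exp_neg_le hε hx hd0.le
          have h3 : (0:ℝ) ≤ Real.exp (-(ε * n x)) := (Real.exp_pos _).le
          calc Real.exp (-(ε * n x)) * n x ^ (α + d - α * β)
              ≤ Real.exp (-(ε * n x)) * n x ^ d := mul_le_mul_of_nonneg_left h1 h3
            _ = n x ^ d * Real.exp (-(ε * n x)) := mul_comm _ _
            _ ≤ E₁ := by rw [hE₁def]; exact h2
        have hR2 : m₀ * C₀ * Real.exp (-(ε * n x)) * (n x ^ α / α)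
            ≤ K₁ * n x ^ (α * β - d) := by
          have hsplitN : n x ^ α = n x ^ (α + d - α * β) * n x ^ (α * β - d) := by
            rw [← Real.rpow_add hN0]
            congr 1
            ring
          have hαα : 1 / α ≤ 1 / αlo := one_div_le_one_div_of_le hαlo0 (hlo α hαD)
          have pos1 : (0:ℝ) ≤ m₀ * C₀ := (mul_pos hm₀ hC₀).le
          calc m₀ * C₀ * Real.exp (-(ε * n x)) * (n x ^ α / α)
              = m₀ * C₀ * (Real.exp (-(ε * n x)) * n x ^ (α + d - α * β)) *
                  n x ^ (α * β - d) * (1 / α) := by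
                rw [hsplitN]; ring
            _ ≤ m₀ * C₀ * E₁ * n x ^ (α * β - d) * (1 / αlo) := by
                refine mul_le_mul ?_ hαα (one_div_pos.2 hα0).le
                  (mul_nonneg (mul_nonneg pos1 hE₁.le) hNpow.le)
                exact mul_le_mul_of_nonneg_right
                  (mul_le_mul_of_nonneg_left hXs pos1) hNpow.le
            _ = K₁ * n x ^ (α * β - d) := by rw [hK₁def]; ring
        calc (∫⁻ t in Set.Ioc (0:ℝ) (n x), ENNReal.ofReal (m₀ * p t x * t ^ (α - 1)))
            ≤ ∫⁻ t in Set.Ioc (0:ℝ) (n x),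
                ENNReal.ofReal (m₀ * C₀ * Real.exp (-(ε * n x))) *
                  ENNReal.ofReal (t ^ (α - 1)) :=
              setLIntegral_mono' measurableSet_Ioc hpt
          _ = ENNReal.ofReal (m₀ * C₀ * Real.exp (-(ε * n x))) *
              ENNReal.ofReal (n x ^ (α - 1 + 1) / (α - 1 + 1)) := by
              rw [lintegral_const_mul' _ _ ENNReal.ofReal_ne_top,
                lint_Ioc_rpow hN0 (by linarith : (-1:ℝ) < α - 1)]
          _ = ENNReal.ofReal (m₀ * C₀ * Real.exp (-(ε * n x)) * (n x ^ α / α)) := by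
              rw [show α - 1 + 1 = α from by ring, ← ENNReal.ofReal_mul hEnn]
          _ ≤ ENNReal.ofReal (K₁ * n x ^ (α * β - d)) := ENNReal.ofReal_le_ofReal hR2
      -- J₂ : intermediate piece
      have hJ2 : (∫⁻ t in Set.Ioc (n x) (n x ^ β), ENNReal.ofReal (m₀ * p t x * t ^ (α - 1)))
          ≤ ENNReal.ofReal (K₂ * n x ^ (α * β - d)) := by
        set W : ℝ := m₀ * C₂ * A * (n x ^ β) ^ (-(1 + q)) with hWdef
        have hW : 0 < W :=
          mul_pos (mul_pos (mul_pos hm₀ hC₂) hA) (Real.rpow_pos_of_pos hNb _)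
        have hpt : ∀ t ∈ Set.Ioc (n x) (n x ^ β),
            ENNReal.ofReal (m₀ * p t x * t ^ (α - 1)) ≤
            ENNReal.ofReal W * ENNReal.ofReal (t ^ α) := by
          intro t ht
          rw [← ENNReal.ofReal_mul hW.le]
          apply ENNReal.ofReal_le_ofReal
          have ht0 : (0:ℝ) < t := hN0.trans ht.1
          have hβ1 : (0:ℝ) < β - 1 := by linarith
          set u : ℝ := n x ^ β / t with hudef
          have hu1 : (1:ℝ) ≤ u := (one_le_div ht0).2 ht.2
          have hu0 : (0:ℝ) < u := lt_of_lt_of_le one_pos hu1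
          set y : ℝ := u ^ (1 / (β - 1)) with hydef
          have hy1 : (1:ℝ) ≤ y := Real.one_le_rpow hu1 (by positivity)
          have hy0 : (0:ℝ) < y := lt_of_lt_of_le one_pos hy1
          have hE2 : u ^ (1 + q) ≤ A * Real.exp (c₂ * y) := by
            have e2 : u ^ (1 + q) = y ^ ((β - 1) * (1 + q)) := by
              rw [hydef, ← Real.rpow_mul hu0.le]
              congr 1
              field_simp
            have e3 : y ^ ((β - 1) * (1 + q)) ≤ y ^ ((M₂:ℝ)) := by
              apply Real.rpow_le_rpow_of_exponent_le hy1
              calc (β - 1) * (1 + q) = (1 + q) * (β - 1) := by ring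
                _ ≤ (M₂:ℝ) := Nat.le_ceil _
            have e4 : y ^ ((M₂:ℝ)) = y ^ M₂ := Real.rpow_natCast y M₂
            have e5 : y ^ M₂ ≤ A * Real.exp (c₂ * y) := by
              have h3 : (c₂ * y) ^ M₂ ≤ (Nat.factorial M₂ : ℝ) * Real.exp (c₂ * y) :=
                pow_le_exp_mul (mul_nonneg hc₂.le hy0.le) M₂
              rw [mul_pow] at h3
              have hc₂M : (0:ℝ) < c₂ ^ M₂ := pow_pos hc₂ _
              rw [hAdef, div_mul_eq_mul_div, le_div_iff₀ hc₂M]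
              calc y ^ M₂ * c₂ ^ M₂ = c₂ ^ M₂ * y ^ M₂ := by ring
                _ ≤ (Nat.factorial M₂ : ℝ) * Real.exp (c₂ * y) := h3
            calc u ^ (1 + q) = y ^ ((β - 1) * (1 + q)) := e2
              _ ≤ y ^ ((M₂:ℝ)) := e3
              _ = y ^ M₂ := e4
              _ ≤ A * Real.exp (c₂ * y) := e5
          have hkey : Real.exp (-(c₂ * y)) ≤ A * t ^ (1 + q) * ((n x ^ β) ^ (1 + q))⁻¹ := by
            have hdiv : u ^ (1 + q) = (n x ^ β) ^ (1 + q) / t ^ (1 + q) := by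
              rw [hudef, Real.div_rpow hNb.le ht0.le]
            have htp : (0:ℝ) < t ^ (1 + q) := Real.rpow_pos_of_pos ht0 _
            have hNp : (0:ℝ) < (n x ^ β) ^ (1 + q) := Real.rpow_pos_of_pos hNb _
            have h6 : (n x ^ β) ^ (1 + q) ≤ A * Real.exp (c₂ * y) * t ^ (1 + q) := by
              rw [hdiv, div_le_iff₀ htp] at hE2
              linarith [hE2]
            have hee : Real.exp (-(c₂ * y)) * Real.exp (c₂ * y) = 1 := by
              rw [← Real.exp_add]
              simp
            have h7 : Real.exp (-(c₂ * y)) * (n x ^ β) ^ (1 + q) ≤ A * t ^ (1 + q) := by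
              calc Real.exp (-(c₂ * y)) * (n x ^ β) ^ (1 + q)
                  ≤ Real.exp (-(c₂ * y)) * (A * Real.exp (c₂ * y) * t ^ (1 + q)) :=
                    mul_le_mul_of_nonneg_left h6 (Real.exp_pos _).le
                _ = (Real.exp (-(c₂ * y)) * Real.exp (c₂ * y)) * (A * t ^ (1 + q)) := by ring
                _ = A * t ^ (1 + q) := by rw [hee, one_mul]
            have h8 := (le_div_iff₀ hNp).2 h7
            rw [div_eq_mul_inv] at h8
            exact h8
          -- assemble pointwise bound
          have hpub := (hlong x hx t ht.1.le).2
          have htq2 : t ^ (-q) * t ^ (α - 1) = t ^ (α - 1 - q) := by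
            rw [← Real.rpow_add ht0]
            congr 1
            ring
          have htq3 : t ^ (α - 1 - q) * t ^ (1 + q) = t ^ α := by
            rw [← Real.rpow_add ht0]
            congr 1
            ring
          have hexparg : -c₂ * (n x ^ β / t) ^ (1 / (β - 1)) = -(c₂ * y) := by
            rw [hydef, hudef]
            ring
          have htnnq : (0:ℝ) ≤ t ^ (α - 1 - q) := Real.rpow_nonneg ht0.le _
          have htnn : (0:ℝ) ≤ t ^ (α - 1) := Real.rpow_nonneg ht0.le _
          calc m₀ * p t x * t ^ (α - 1)
              ≤ m₀ * (C₂ * t ^ (-q) * Real.exp (-(c₂ * y))) * t ^ (α - 1) := by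
                refine mul_le_mul_of_nonneg_right (mul_le_mul_of_nonneg_left ?_ hm₀.le) htnn
                rw [← hexparg]
                exact hpub
            _ = m₀ * C₂ * Real.exp (-(c₂ * y)) * t ^ (α - 1 - q) := by
                rw [← htq2]; ring
            _ ≤ m₀ * C₂ * (A * t ^ (1 + q) * ((n x ^ β) ^ (1 + q))⁻¹) * t ^ (α - 1 - q) := by
                refine mul_le_mul_of_nonneg_right
                  (mul_le_mul_of_nonneg_left hkey (mul_pos hm₀ hC₂).le) htnnq
            _ = W * t ^ α := by
                rw [hWdef, Real.rpow_neg hNb.le, ← htq3]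
                ring
        have hR3 : W * ((n x ^ β) ^ (α + 1) / (α + 1)) ≤ K₂ * n x ^ (α * β - d) := by
          have e6 : (n x ^ β) ^ (-(1 + q)) * (n x ^ β) ^ (α + 1) = n x ^ (α * β - d) := by
            rw [← Real.rpow_add hNb, show -(1 + q) + (α + 1) = α - q from by ring, hNbαq]
          have h9 : 1 / (α + 1) ≤ 1 := by
            rw [div_le_one (by linarith)]
            linarith
          calc W * ((n x ^ β) ^ (α + 1) / (α + 1))
              = m₀ * C₂ * A * ((n x ^ β) ^ (-(1 + q)) * (n x ^ β) ^ (α + 1)) * (1 / (α + 1)) := by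
                rw [hWdef]; ring
            _ = K₂ * n x ^ (α * β - d) * (1 / (α + 1)) := by rw [e6, hK₂def]
            _ ≤ K₂ * n x ^ (α * β - d) * 1 :=
                mul_le_mul_of_nonneg_left h9 (mul_nonneg hK₂.le hNpow.le)
            _ = K₂ * n x ^ (α * β - d) := mul_one _
        calc (∫⁻ t in Set.Ioc (n x) (n x ^ β), ENNReal.ofReal (m₀ * p t x * t ^ (α - 1)))
            ≤ ∫⁻ t in Set.Ioc (n x) (n x ^ β),
                ENNReal.ofReal W * ENNReal.ofReal (t ^ α) :=
              setLIntegral_mono' measurableSet_Ioc hpt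
          _ ≤ ∫⁻ t in Set.Ioc (0:ℝ) (n x ^ β),
                ENNReal.ofReal W * ENNReal.ofReal (t ^ α) :=
              lintegral_mono_set (fun t ht => ⟨hN0.trans ht.1, ht.2⟩)
          _ = ENNReal.ofReal W * ENNReal.ofReal ((n x ^ β) ^ (α + 1) / (α + 1)) := by
              rw [lintegral_const_mul' _ _ ENNReal.ofReal_ne_top,
                lint_Ioc_rpow hNb (by linarith : (-1:ℝ) < α)]
          _ = ENNReal.ofReal (W * ((n x ^ β) ^ (α + 1) / (α + 1))) :=
              (ENNReal.ofReal_mul hW.le).symm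
          _ ≤ ENNReal.ofReal (K₂ * n x ^ (α * β - d)) := ENNReal.ofReal_le_ofReal hR3
      -- J₃ : long time piece
      have hJ3 : (∫⁻ t in Set.Ioi (n x ^ β), ENNReal.ofReal (m₀ * p t x * t ^ (α - 1)))
          ≤ ENNReal.ofReal (K₃ * n x ^ (α * β - d)) := by
        have hmC : (0:ℝ) < m₀ * C₂ := mul_pos hm₀ hC₂
        have hpt : ∀ t ∈ Set.Ioi (n x ^ β),
            ENNReal.ofReal (m₀ * p t x * t ^ (α - 1)) ≤
            ENNReal.ofReal (m₀ * C₂) * ENNReal.ofReal (t ^ (α - 1 - q)) := by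
          intro t ht
          rw [Set.mem_Ioi] at ht
          have ht0 : (0:ℝ) < t := hNb.trans ht
          have hNt : n x ≤ t := le_trans hNNb ht.le
          have hpub := (hlong x hx t hNt).2
          have hz : (0:ℝ) ≤ (n x ^ β / t) ^ (1 / (β - 1)) :=
            Real.rpow_nonneg (div_nonneg hNb.le ht0.le) _
          have hexple : Real.exp (-c₂ * (n x ^ β / t) ^ (1 / (β - 1))) ≤ 1 := by
            rw [Real.exp_le_one_iff]
            have : (0:ℝ) ≤ c₂ * (n x ^ β / t) ^ (1 / (β - 1)) := mul_nonneg hc₂.le hz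
            linarith
          rw [← ENNReal.ofReal_mul hmC.le]
          apply ENNReal.ofReal_le_ofReal
          have htq2 : t ^ (-q) * t ^ (α - 1) = t ^ (α - 1 - q) := by
            rw [← Real.rpow_add ht0]
            congr 1
            ring
          have htnn : (0:ℝ) ≤ t ^ (α - 1) := Real.rpow_nonneg ht0.le _
          have htqnn : (0:ℝ) ≤ t ^ (-q) := Real.rpow_nonneg ht0.le _
          calc m₀ * p t x * t ^ (α - 1)
              ≤ m₀ * (C₂ * t ^ (-q) * Real.exp (-c₂ * (n x ^ β / t) ^ (1 / (β - 1)))) *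
                  t ^ (α - 1) :=
                mul_le_mul_of_nonneg_right (mul_le_mul_of_nonneg_left hpub hm₀.le) htnn
            _ ≤ m₀ * (C₂ * t ^ (-q) * 1) * t ^ (α - 1) := by
                refine mul_le_mul_of_nonneg_right (mul_le_mul_of_nonneg_left ?_ hm₀.le) htnn
                exact mul_le_mul_of_nonneg_left hexple (mul_nonneg hC₂.le htqnn)
            _ = m₀ * C₂ * (t ^ (-q) * t ^ (α - 1)) := by ring
            _ = m₀ * C₂ * t ^ (α - 1 - q) := by rw [htq2]
        have hR4 : m₀ * C₂ * ((n x ^ β) ^ (α - 1 - q + 1) / (-(α - 1 - q + 1)))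
            ≤ K₃ * n x ^ (α * β - d) := by
          have e7 : α - 1 - q + 1 = α - q := by ring
          have e8 : -(α - 1 - q + 1) = q - α := by ring
          rw [e8, e7, hNbαq]
          have h10 : 1 / (q - α) ≤ 1 / (q - αhi) :=
            one_div_le_one_div_of_le (by linarith) (by linarith [hhi α hαD])
          calc m₀ * C₂ * (n x ^ (α * β - d) / (q - α))
              = m₀ * C₂ * n x ^ (α * β - d) * (1 / (q - α)) := by ring
            _ ≤ m₀ * C₂ * n x ^ (α * β - d) * (1 / (q - αhi)) :=
                mul_le_mul_of_nonneg_left h10 (mul_nonneg hmC.le hNpow.le)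
            _ = K₃ * n x ^ (α * β - d) := by rw [hK₃def]; ring
        calc (∫⁻ t in Set.Ioi (n x ^ β), ENNReal.ofReal (m₀ * p t x * t ^ (α - 1)))
            ≤ ∫⁻ t in Set.Ioi (n x ^ β),
                ENNReal.ofReal (m₀ * C₂) * ENNReal.ofReal (t ^ (α - 1 - q)) :=
              setLIntegral_mono' measurableSet_Ioi hpt
          _ = ENNReal.ofReal (m₀ * C₂) *
              ENNReal.ofReal ((n x ^ β) ^ (α - 1 - q + 1) / (-(α - 1 - q + 1))) := by
              rw [lintegral_const_mul' _ _ ENNReal.ofReal_ne_top,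
                lint_Ioi_rpow hNb (by linarith : α - 1 - q < -1)]
          _ = ENNReal.ofReal (m₀ * C₂ *
              ((n x ^ β) ^ (α - 1 - q + 1) / (-(α - 1 - q + 1)))) :=
              (ENNReal.ofReal_mul hmC.le).symm
          _ ≤ ENNReal.ofReal (K₃ * n x ^ (α * β - d)) := ENNReal.ofReal_le_ofReal hR4
      -- split the integral
      have hsplit : J ≤ (∫⁻ t in Set.Ioc (0:ℝ) (n x), ENNReal.ofReal (m₀ * p t x * t ^ (α - 1)))
          + ((∫⁻ t in Set.Ioc (n x) (n x ^ β), ENNReal.ofReal (m₀ * p t x * t ^ (α - 1)))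
          + (∫⁻ t in Set.Ioi (n x ^ β), ENNReal.ofReal (m₀ * p t x * t ^ (α - 1)))) := by
        have hsub : Set.Ioi (0:ℝ) ⊆ Set.Ioc (0:ℝ) (n x) ∪
            (Set.Ioc (n x) (n x ^ β) ∪ Set.Ioi (n x ^ β)) := by
          intro t ht
          rw [Set.mem_Ioi] at ht
          by_cases h1 : t ≤ n x
          · exact Or.inl ⟨ht, h1⟩
          · push_neg at h1
            by_cases h2 : t ≤ n x ^ β
            · exact Or.inr (Or.inl ⟨h1, h2⟩)
            · push_neg at h2
              exact Or.inr (Or.inr h2)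
        calc J ≤ ∫⁻ t in Set.Ioc (0:ℝ) (n x) ∪
              (Set.Ioc (n x) (n x ^ β) ∪ Set.Ioi (n x ^ β)),
              ENNReal.ofReal (m₀ * p t x * t ^ (α - 1)) := lintegral_mono_set hsub
          _ ≤ _ := le_trans (lintegral_union_le _ _ _)
              (add_le_add le_rfl (lintegral_union_le _ _ _))
      have hCsum : (0:ℝ) ≤ K₁ + K₂ + K₃ := by positivity
      calc rieszKernel m₀ p α x = ENNReal.ofReal (1 / Real.Gamma α) * J := hkerJ
        _ ≤ ENNReal.ofReal (Γmin⁻¹) *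
            (ENNReal.ofReal (K₁ * n x ^ (α * β - d)) +
              (ENNReal.ofReal (K₂ * n x ^ (α * β - d)) +
                ENNReal.ofReal (K₃ * n x ^ (α * β - d)))) :=
            mul_le_mul' hΓle (hsplit.trans (add_le_add hJ1 (add_le_add hJ2 hJ3)))
        _ = ENNReal.ofReal (Γmin⁻¹) * ENNReal.ofReal ((K₁ + K₂ + K₃) * n x ^ (α * β - d)) := by
            rw [← ENNReal.ofReal_add (mul_nonneg hK₂.le hNpow.le) (mul_nonneg hK₃.le hNpow.le),
              ← ENNReal.ofReal_add (mul_nonneg hK₁.le hNpow.le)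
                (add_nonneg (mul_nonneg hK₂.le hNpow.le) (mul_nonneg hK₃.le hNpow.le))]
            congr 1
            ring
        _ = ENNReal.ofReal (Γmin⁻¹ * ((K₁ + K₂ + K₃) * n x ^ (α * β - d))) :=
            (ENNReal.ofReal_mul (inv_pos.2 hΓmin0).le).symm
        _ ≤ ENNReal.ofReal (max c0 C0 * n x ^ (α * β - d)) := by
            apply ENNReal.ofReal_le_ofReal
            have e9 : Γmin⁻¹ * ((K₁ + K₂ + K₃) * n x ^ (α * β - d)) =
                C0 * n x ^ (α * β - d) := by
              rw [hC0def]; ring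
            rw [e9]
            exact mul_le_mul_of_nonneg_right (le_max_right _ _) hNpow.le


end HG
end
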